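/- If G is a finite simple 2P_3-free graph, M is an acyclic matching in G, and T is a connected component of G(M) that is not isomorphic to K_2, then a longest path in T has at least 4 and at most 6 vertices. -/

import Mathlib

open SimpleGraph

/-- A graph `G` is *2P₃-free* if it contains no induced subgraph isomorphic to the
disjoint union of two paths on three vertices.  (Graph embeddings `↪g` are exactly
induced-subgraph copies.) -/
def TwoP3Free {V : Type*} (G : SimpleGraph V) : Prop :=
  IsEmpty ((pathGraph 3 ⊕g pathGraph 3) ↪g G)

private lemma isAcyclic_of_embedding' {A B : Type*} {G1 : SimpleGraph A} {G2 : SimpleGraph B}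
    (f : G1 ↪g G2) (h : G2.IsAcyclic) : G1.IsAcyclic :=
  fun _ c hc => h (c.map f.toHom) (hc.map f.injective)

private lemma no_chord' {W : Type*} {H : SimpleGraph W} (hac : H.IsAcyclic) {x y : W}
    (p : H.Walk x y) (hp : p.IsPath) (h2 : 2 ≤ p.length) : ¬ H.Adj x y := by
  intro hadj
  have heq := hac.path_unique ⟨p, hp⟩ (SimpleGraph.Path.singleton hadj)
  have hlen : p.length = 1 := by
    have := congrArg (fun q : H.Path x y => q.1.length) heq
    simpa [SimpleGraph.Path.singleton] using this
  omega

private lemma exists_path_length_eq' {W : Type*} {H : SimpleGraph W} (n : ℕ) :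
    ∀ {u v : W} (p : H.Walk u v), p.IsPath → n ≤ p.length →
      ∃ (a b : W) (q : H.Walk a b), q.IsPath ∧ q.length = n := by
  intro u v p
  induction p with
  | nil =>
    intro _ hn
    simp only [Walk.length_nil, Nat.le_zero] at hn
    exact ⟨u, u, .nil, by simp, by simp [hn]⟩
  | cons h q ih =>
    intro hp hn
    rcases eq_or_lt_of_le hn with heq | hlt
    · exact ⟨_, _, .cons h q, hp, heq.symm⟩
    · exact ih hp.of_cons (by simp at hlt ⊢; omega)

private lemma exists_exit' {W : Type*} {H : SimpleGraph W} (S : Set W) :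
    ∀ {a x : W} (_ : H.Walk a x), a ∈ S → x ∉ S →
      ∃ b d, b ∈ S ∧ d ∉ S ∧ H.Adj b d := by
  intro a x p
  induction p with
  | nil => intro h h'; exact absurd h h'
  | @cons a y x h q ih =>
    intro ha hx
    by_cases hmem : y ∈ S
    · exact ih hmem hx
    · exact ⟨a, y, ha, hmem, h⟩

private lemma no_path_six' {W : Type*} {H : SimpleGraph W} (hac : H.IsAcyclic)
    (hfree : IsEmpty ((pathGraph 3 ⊕g pathGraph 3) ↪g H)) :
    ∀ {u v : W} (p : H.Walk u v), p.IsPath → p.length ≠ 6 := by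
  intro u v p hp hlen
  cases p with
  | nil => simp at hlen
  | cons h1 p => cases p with
  | nil => simp at hlen
  | cons h2 p => cases p with
  | nil => simp at hlen
  | cons h3 p => cases p with
  | nil => simp at hlen
  | cons h4 p => cases p with
  | nil => simp at hlen
  | cons h5 p => cases p with
  | nil => simp at hlen
  | cons h6 p => cases p with
  | cons h7 p => simp at hlen

  | nil =>
    clear hlen
    rename_i b1 b2 b3 b4 b5
    have hnd := hp.support_nodup
    simp [List.nodup_cons] at hnd
    obtain ⟨⟨n01, n02, n03, n04, n05, n06⟩, ⟨n12, n13, n14, n15, n16⟩,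
      ⟨n23, n24, n25, n26⟩, ⟨n34, n35, n36⟩, ⟨n45, n46⟩, n56⟩ := hnd
    have c02 : ¬ H.Adj u b2 :=
      no_chord' hac (.cons h1 (.cons h2 .nil))
        (by simp [Walk.cons_isPath_iff]; tauto) (by simp)
    have c46 : ¬ H.Adj b4 v :=
      no_chord' hac (.cons h5 (.cons h6 .nil))
        (by simp [Walk.cons_isPath_iff]; tauto) (by simp)
    have c04 : ¬ H.Adj u b4 :=
      no_chord' hac (.cons h1 (.cons h2 (.cons h3 (.cons h4 .nil))))
        (by simp [Walk.cons_isPath_iff]; tauto) (by simp)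
    have c05 : ¬ H.Adj u b5 :=
      no_chord' hac (.cons h1 (.cons h2 (.cons h3 (.cons h4 (.cons h5 .nil)))))
        (by simp [Walk.cons_isPath_iff]; tauto) (by simp)
    have c06 : ¬ H.Adj u v :=
      no_chord' hac (.cons h1 (.cons h2 (.cons h3 (.cons h4 (.cons h5 (.cons h6 .nil))))))
        hp (by simp)
    have c14 : ¬ H.Adj b1 b4 :=
      no_chord' hac (.cons h2 (.cons h3 (.cons h4 .nil)))
        (by simp [Walk.cons_isPath_iff]; tauto) (by simp)
    have c15 : ¬ H.Adj b1 b5 :=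
      no_chord' hac (.cons h2 (.cons h3 (.cons h4 (.cons h5 .nil))))
        (by simp [Walk.cons_isPath_iff]; tauto) (by simp)
    have c16 : ¬ H.Adj b1 v :=
      no_chord' hac (.cons h2 (.cons h3 (.cons h4 (.cons h5 (.cons h6 .nil)))))
        (by simp [Walk.cons_isPath_iff]; tauto) (by simp)
    have c24 : ¬ H.Adj b2 b4 :=
      no_chord' hac (.cons h3 (.cons h4 .nil))
        (by simp [Walk.cons_isPath_iff]; tauto) (by simp)
    have c25 : ¬ H.Adj b2 b5 :=
      no_chord' hac (.cons h3 (.cons h4 (.cons h5 .nil)))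
        (by simp [Walk.cons_isPath_iff]; tauto) (by simp)
    have c26 : ¬ H.Adj b2 v :=
      no_chord' hac (.cons h3 (.cons h4 (.cons h5 (.cons h6 .nil))))
        (by simp [Walk.cons_isPath_iff]; tauto) (by simp)
    have s1 := h1.symm; have s2 := h2.symm; have s5 := h5.symm; have s6 := h6.symm
    have d02 : ¬ H.Adj b2 u := fun h => c02 h.symm
    have d46 : ¬ H.Adj v b4 := fun h => c46 h.symm
    have d04 : ¬ H.Adj b4 u := fun h => c04 h.symm
    have d05 : ¬ H.Adj b5 u := fun h => c05 h.symm
    have d06 : ¬ H.Adj v u := fun h => c06 h.symm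
    have d14 : ¬ H.Adj b4 b1 := fun h => c14 h.symm
    have d15 : ¬ H.Adj b5 b1 := fun h => c15 h.symm
    have d16 : ¬ H.Adj v b1 := fun h => c16 h.symm
    have d24 : ¬ H.Adj b4 b2 := fun h => c24 h.symm
    have d25 : ¬ H.Adj b5 b2 := fun h => c25 h.symm
    have d26 : ¬ H.Adj v b2 := fun h => c26 h.symm
    refine hfree.elim ⟨⟨Sum.elim ![u, b1, b2] ![b4, b5, v], ?_⟩, ?_⟩
    · rintro (i | i) (j | j) hij <;> fin_cases i <;> fin_cases j <;>
        simp_all [Fin.isValue]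
    · intro a b; change H.Adj (Sum.elim ![u, b1, b2] ![b4, b5, v] a) (Sum.elim ![u, b1, b2] ![b4, b5, v] b) ↔ _
      revert a b; rintro (i | i) (j | j) <;> fin_cases i <;> fin_cases j <;>
        simp_all [pathGraph_adj, Fin.isValue]


/-- If `G` is a finite simple `2P₃`-free graph, `M` is an acyclic
matching in `G`, and `T` is a connected component of `G(M)` that is not isomorphic
to `K₂`, then a longest path in `T` has at least `4` and at most `6` vertices:
there is a path in `T` on at least `4` vertices (length `≥ 3`), and every path in `T`
has at most `6` vertices (length `≤ 5`). -/
theorem twoP3Free_acyclicMatching_longest_path {V : Type*} [Fintype V]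
    (G : SimpleGraph V) (hfree : TwoP3Free G) (M : G.Subgraph) (hM : M.IsMatching)
    (hac : (G.induce M.verts).IsAcyclic)
    (c : (G.induce M.verts).ConnectedComponent)
    (hc : ¬ Nonempty (((G.induce M.verts).induce c.supp) ≃g (⊤ : SimpleGraph (Fin 2)))) :
    (∃ (u v : c.supp) (p : ((G.induce M.verts).induce c.supp).Walk u v),
        p.IsPath ∧ 3 ≤ p.length) ∧
    (∀ (u v : c.supp) (p : ((G.induce M.verts).induce c.supp).Walk u v),
        p.IsPath → p.length ≤ 5) := by
  constructor
  · -- lower bound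
    classical
    have hH0 : True := trivial
    obtain ⟨v0, hv0⟩ := c.exists_rep
    obtain ⟨w0, hw0, huniq⟩ := hM v0.2
    set w1 : ↥M.verts := ⟨w0, hw0.snd_mem⟩ with hw1
    have hAdjvw : (G.induce M.verts).Adj v0 w1 := hw0.adj_sub
    have hne_vw : v0 ≠ w1 := hAdjvw.ne
    have memv : v0 ∈ c.supp := hv0
    have memw : w1 ∈ c.supp := by
      rw [ConnectedComponent.mem_supp_iff]
      exact (ConnectedComponent.sound hAdjvw.symm.reachable).trans hv0
    have key : ∀ (x1 x2 x3 x4 : ↥M.verts) (m1 : x1 ∈ c.supp) (m2 : x2 ∈ c.supp)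
        (m3 : x3 ∈ c.supp) (m4 : x4 ∈ c.supp), (G.induce M.verts).Adj x1 x2 → (G.induce M.verts).Adj x2 x3 → (G.induce M.verts).Adj x3 x4 →
        x1 ≠ x3 → x1 ≠ x4 → x2 ≠ x4 →
        (∃ (u v : c.supp) (p : ((G.induce M.verts).induce c.supp).Walk u v), p.IsPath ∧ 3 ≤ p.length) := by
      intro x1 x2 x3 x4 m1 m2 m3 m4 a12 a23 a34 n13 n14 n24
      refine ⟨⟨x1, m1⟩, ⟨x4, m4⟩,
        .cons (show ((G.induce M.verts).induce c.supp).Adj ⟨x1, m1⟩ ⟨x2, m2⟩ from a12)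
          (.cons (show ((G.induce M.verts).induce c.supp).Adj ⟨x2, m2⟩ ⟨x3, m3⟩ from a23)
            (.cons (show ((G.induce M.verts).induce c.supp).Adj ⟨x3, m3⟩ ⟨x4, m4⟩ from a34) .nil)), ?_, Nat.le_refl 3⟩
      have n12 := a12.ne; have n23 := a23.ne; have n34 := a34.ne
      refine Walk.IsPath.mk' (show List.Nodup [(⟨x1, m1⟩ : c.supp), ⟨x2, m2⟩, ⟨x3, m3⟩, ⟨x4, m4⟩] from ?_)
      simp [n12, n13, n14, n23, n24, n34]
    by_cases hex : ∃ x ∈ c.supp, x ≠ v0 ∧ x ≠ w1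
    · obtain ⟨x, hxsupp, hxv, hxw⟩ := hex
      have hreach : (G.induce M.verts).Reachable v0 x :=
        ConnectedComponent.exact (hv0.trans ((ConnectedComponent.mem_supp_iff _ _).mp hxsupp).symm)
      obtain ⟨b, d, hbS, hdS, hbd⟩ :=
        exists_exit' ({v0, w1} : Set ↥M.verts) hreach.some (by simp) (by simp [hxv, hxw])
      simp only [Set.mem_insert_iff, Set.mem_singleton_iff] at hbS hdS
      push_neg at hdS
      obtain ⟨hd_v, hd_w⟩ := hdS
      have hbsupp : b ∈ c.supp := by
        rcases hbS with hb | hb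
        · rw [hb]; exact memv
        · rw [hb]; exact memw
      have hdsupp : d ∈ c.supp := by
        rw [ConnectedComponent.mem_supp_iff]
        exact (ConnectedComponent.sound hbd.symm.reachable).trans
          ((ConnectedComponent.mem_supp_iff _ _).mp hbsupp)
      obtain ⟨e0, he0, heuniq⟩ := hM d.2
      set e1 : ↥M.verts := ⟨e0, he0.snd_mem⟩ with he1
      have hAdjde : (G.induce M.verts).Adj d e1 := he0.adj_sub
      have hesupp : e1 ∈ c.supp := by
        rw [ConnectedComponent.mem_supp_iff]
        exact (ConnectedComponent.sound hAdjde.symm.reachable).trans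
          ((ConnectedComponent.mem_supp_iff _ _).mp hdsupp)
      have hev : e1 ≠ v0 := by
        intro h
        have h' : e0 = ↑v0 := congrArg Subtype.val h
        have : (d : V) = w0 := huniq _ (h' ▸ he0).symm
        exact hd_w (Subtype.ext this)
      have hew : e1 ≠ w1 := by
        intro h
        have h' : e0 = w0 := congrArg Subtype.val h
        obtain ⟨z, hz, hzuniq⟩ := hM hw0.snd_mem
        have hz1 : (d : V) = z := hzuniq _ (h' ▸ he0).symm
        have hz2 : (v0 : V) = z := hzuniq _ hw0.symm
        exact hd_v (Subtype.ext (hz1.trans hz2.symm))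
      rcases hbS with hb | hb
      · have hbd' : (G.induce M.verts).Adj v0 d := by rwa [hb] at hbd
        exact key w1 v0 d e1 memw memv hdsupp hesupp hAdjvw.symm hbd' hAdjde
          (Ne.symm hd_w) (Ne.symm hew) (Ne.symm hev)
      · have hbd' : (G.induce M.verts).Adj w1 d := by rwa [hb] at hbd
        exact key v0 w1 d e1 memv memw hdsupp hesupp hAdjvw hbd' hAdjde
          (Ne.symm hd_v) (Ne.symm hev) (Ne.symm hew)
    · exfalso
      apply hc
      push_neg at hex
      refine ⟨⟨⟨fun x => if (x : ↥M.verts) = v0 then 0 else 1,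
          fun i => if i = 0 then ⟨v0, memv⟩ else ⟨w1, memw⟩, ?_, ?_⟩, ?_⟩⟩
      · intro x
        by_cases hxv : (x : ↥M.verts) = v0
        · simp only [hxv, if_pos rfl]
          exact Subtype.ext hxv.symm
        · have hxw := hex x x.2 hxv
          simp only [if_neg hxv, if_neg (by decide : (1 : Fin 2) ≠ 0)]
          exact Subtype.ext hxw.symm
      · intro i
        fin_cases i
        · simp
        · simp [Ne.symm hne_vw]
      · intro a b
        simp only [top_adj, Equiv.coe_fn_mk]
        constructor
        · intro hab
          by_cases hav : (a : ↥M.verts) = v0 <;> by_cases hbv : (b : ↥M.verts) = v0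
          · simp [hav, hbv] at hab
          · have hbw := hex b b.2 hbv
            show (G.induce M.verts).Adj ↑a ↑b
            rw [hav, hbw]
            exact hAdjvw
          · have haw := hex a a.2 hav
            show (G.induce M.verts).Adj ↑a ↑b
            rw [haw, hbv]
            exact hAdjvw.symm
          · simp [hav, hbv] at hab
        · intro hab
          have hne : (a : ↥M.verts) ≠ ↑b := fun h => hab.ne (Subtype.ext h)
          by_cases hav : (a : ↥M.verts) = v0 <;> by_cases hbv : (b : ↥M.verts) = v0
          · exact absurd (hav.trans hbv.symm) hne
          · simp [hav, hbv]
          · simp [hav, hbv]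
          · have haw := hex a a.2 hav
            have hbw := hex b b.2 hbv
            exact absurd (haw.trans hbw.symm) hne
  · -- upper bound
    intro u v p hp
    by_contra hlen
    push_neg at hlen
    have hemb : ((G.induce M.verts).induce c.supp) ↪g G :=
      (Embedding.induce M.verts).comp (Embedding.induce c.supp)
    have hfreeH : IsEmpty ((pathGraph 3 ⊕g pathGraph 3) ↪g ((G.induce M.verts).induce c.supp)) :=
      ⟨fun F => hfree.false (hemb.comp F)⟩
    have hacH : ((G.induce M.verts).induce c.supp).IsAcyclic :=
      isAcyclic_of_embedding' (Embedding.induce c.supp) hac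
    obtain ⟨a, b, q, hq, hq6⟩ := exists_path_length_eq' 6 p hp (by omega)
    exact no_path_six' hacH hfreeH q hq hq6
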